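/- For every partition λ of N, every n ∈ I^λ, and all t, x, y ∈ ℂ: H_n^{(λ)}(t x, t² y) = t^n H_n^{(λ)}(x, y); that is, H_n^{(λ)} is homogeneous of weighted degree n when x is given weight 1 and y is given weight 2. -/

import Mathlib

open Finset Matrix MeasureTheory

noncomputable section

/-- The bivariate Hermite polynomial
`H n x y = n! * ∑_{0 ≤ 2k ≤ n} x^(n-2k) y^k / (k! (n-2k)!)`. -/
def Herm (n : ℕ) (x y : ℂ) : ℂ :=
  (n.factorial : ℂ) * ∑ k ∈ Finset.range (n / 2 + 1),
    x ^ (n - 2 * k) * y ^ k / ((k.factorial : ℂ) * ((n - 2 * k).factorial : ℂ))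

/-- The Wronskian determinant of `r` functions of one complex variable. -/
def Wr (r : ℕ) (g : Fin r → ℂ → ℂ) (x : ℂ) : ℂ :=
  Matrix.det (Matrix.of fun i j : Fin r => iteratedDeriv (i : ℕ) (g j) x)

/-- `k_i = λ_i - i + ℓ` (0-indexed: `k i = p i + ℓ - (i+1)`). -/
def kIdx (p : ℕ → ℕ) (ℓ i : ℕ) : ℕ := p i + ℓ - (i + 1)

/-- `∏_{1 ≤ i < j ≤ ℓ} (k_i - k_j)`. -/
def prodK (p : ℕ → ℕ) (ℓ : ℕ) : ℂ :=
  ∏ i ∈ Finset.range ℓ, ∏ j ∈ Finset.range ℓ,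
    if i < j then ((kIdx p ℓ i : ℂ) - (kIdx p ℓ j : ℂ)) else 1

/-- `τ^λ(x,y) = Wr(H_{k_ℓ},…,H_{k_1})(x,y) / ∏_{i<j}(k_i-k_j)`. -/
def tauLam (p : ℕ → ℕ) (ℓ : ℕ) (x y : ℂ) : ℂ :=
  Wr ℓ (fun j => fun t => Herm (kIdx p ℓ (ℓ - 1 - (j : ℕ))) t y) x / prodK p ℓ

/-- The exceptional Hermite polynomial
`H_n^{(λ)}(x,y) = Wr(H_{k_ℓ},…,H_{k_1},H_{n-N+ℓ}) / (∏_{i<j}(k_i-k_j) ∏_i (n-N+ℓ-k_i))`. -/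
def XHP (p : ℕ → ℕ) (ℓ N n : ℕ) (x y : ℂ) : ℂ :=
  Wr (ℓ + 1)
    (fun j => if (j : ℕ) < ℓ then (fun t => Herm (kIdx p ℓ (ℓ - 1 - (j : ℕ))) t y)
      else (fun t => Herm (n + ℓ - N) t y)) x
  / (prodK p ℓ *
      ∏ i ∈ Finset.range ℓ, ((n : ℂ) + (ℓ : ℂ) - (N : ℂ) - (kIdx p ℓ i : ℂ)))

/-- The Maya diagram `M^λ = {λ_i - i : i ≥ 1} ⊆ ℤ` (0-indexed: `p i - (i+1)`). -/
def Maya (p : ℕ → ℕ) : Set ℤ := {m | ∃ i : ℕ, m = (p i : ℤ) - ((i : ℤ) + 1)}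

/-- `s(n) = ∏_{k ∈ K_N^λ} (n - k)` where `K_N^λ = {λ_i - i + N : 1 ≤ i ≤ N}`. -/
def sFun (p : ℕ → ℕ) (N n : ℕ) : ℂ :=
  ∏ i ∈ Finset.range N, ((n : ℂ) - ((p i : ℂ) + (N : ℂ) - ((i : ℂ) + 1)))

/-! ### Auxiliary lemmas -/

private lemma herm_hasDerivAt (m : ℕ) (y x : ℂ) :
    HasDerivAt (fun s : ℂ => Herm m s y) ((m : ℂ) * Herm (m - 1) x y) x := by
  have h : HasDerivAt (fun s : ℂ => Herm m s y)
      ((m.factorial : ℂ) * ∑ k ∈ Finset.range (m / 2 + 1),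
        ((m - 2 * k : ℕ) : ℂ) * x ^ (m - 2 * k - 1) *
          (y ^ k / ((k.factorial : ℂ) * ((m - 2 * k).factorial : ℂ)))) x := by
    unfold Herm
    simp only [mul_div_assoc]
    exact (HasDerivAt.fun_sum fun k _ =>
      (hasDerivAt_pow (m - 2 * k) x).mul_const _).const_mul _
  convert h using 1
  rcases Nat.eq_zero_or_pos m with hm | hm
  · subst hm; simp [Herm]
  have hrange : ∑ k ∈ Finset.range ((m-1) / 2 + 1),
      ((m - 2 * k : ℕ) : ℂ) * x ^ (m - 2 * k - 1) *
        (y ^ k / ((k.factorial : ℂ) * ((m - 2 * k).factorial : ℂ)))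
      = ∑ k ∈ Finset.range (m / 2 + 1),
      ((m - 2 * k : ℕ) : ℂ) * x ^ (m - 2 * k - 1) *
        (y ^ k / ((k.factorial : ℂ) * ((m - 2 * k).factorial : ℂ))) := by
    apply Finset.sum_subset
    · apply Finset.range_subset_range.mpr; omega
    · intro k hk hk'
      simp only [Finset.mem_range] at hk hk'
      have : m - 2 * k = 0 := by omega
      rw [this]; simp
  rw [← hrange]
  unfold Herm
  rw [Finset.mul_sum, Finset.mul_sum, Finset.mul_sum]
  apply Finset.sum_congr rfl
  intro k hk
  simp only [Finset.mem_range] at hk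
  have h2k : 2 * k < m := by omega
  have e1 : m - 2 * k - 1 = m - 1 - 2 * k := by omega
  have e2 : (m.factorial : ℂ) = (m : ℂ) * ((m-1).factorial : ℂ) := by
    obtain ⟨mm, hmm⟩ : ∃ mm, m = mm + 1 := ⟨m - 1, by omega⟩
    subst hmm
    simp [Nat.factorial_succ]
  have e3 : ((m - 2*k).factorial : ℂ) = ((m - 2*k : ℕ) : ℂ) * ((m - 1 - 2*k).factorial : ℂ) := by
    have h4 : m - 2*k = (m - 1 - 2*k) + 1 := by omega
    rw [h4, Nat.factorial_succ]
    push_cast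
    rfl
  have hne1 : ((k.factorial : ℂ)) ≠ 0 := Nat.cast_ne_zero.mpr k.factorial_ne_zero
  have hne2 : (((m-1-2*k).factorial : ℂ)) ≠ 0 := Nat.cast_ne_zero.mpr (Nat.factorial_ne_zero _)
  have hne3 : ((m - 2*k : ℕ) : ℂ) ≠ 0 := Nat.cast_ne_zero.mpr (by omega)
  rw [e1, e2, e3]
  field_simp

private lemma iteratedDeriv_herm (i m : ℕ) (y : ℂ) :
    iteratedDeriv i (fun s : ℂ => Herm m s y) =
      fun x => (m.descFactorial i : ℂ) * Herm (m - i) x y := by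
  induction i with
  | zero => simp [iteratedDeriv_zero]
  | succ i ih =>
    rw [iteratedDeriv_succ, ih]
    funext x
    rw [((herm_hasDerivAt (m - i) y x).const_mul ((m.descFactorial i : ℂ))).deriv]
    rw [Nat.descFactorial_succ, Nat.cast_mul, ← Nat.sub_sub]
    ring

private lemma herm_hom (m : ℕ) (t x y : ℂ) :
    Herm m (t * x) (t ^ 2 * y) = t ^ m * Herm m x y := by
  unfold Herm
  have h : ∀ k ∈ Finset.range (m / 2 + 1),
      (t*x)^(m-2*k) * (t^2*y)^k / ((k.factorial:ℂ) * ((m-2*k).factorial:ℂ))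
      = t^m * (x^(m-2*k) * y^k / ((k.factorial:ℂ) * ((m-2*k).factorial:ℂ))) := by
    intro k hk
    simp only [Finset.mem_range] at hk
    have hpow : t ^ (m - 2*k) * (t^2)^k = t ^ m := by
      rw [← pow_mul, ← pow_add]
      congr 1
      omega
    rw [mul_pow, mul_pow, ← hpow]
    ring
  rw [Finset.sum_congr rfl h, ← Finset.mul_sum]
  ring

private lemma continuous_herm (m : ℕ) (x y : ℂ) :
    Continuous fun t : ℂ => Herm m (t * x) (t ^ 2 * y) := by
  unfold Herm
  simp only [div_eq_mul_inv]
  fun_prop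

/-- Column degrees of the Wronskian matrix of `XHP`. -/
private def mAux (p : ℕ → ℕ) (ℓ N n j : ℕ) : ℕ :=
  if j < ℓ then kIdx p ℓ (ℓ - 1 - j) else n + ℓ - N

/-- The Wronskian determinant of `XHP` written out explicitly. -/
private def DAux (p : ℕ → ℕ) (ℓ N n : ℕ) (x y : ℂ) : ℂ :=
  Matrix.det (Matrix.of fun i j : Fin (ℓ+1) =>
    ((mAux p ℓ N n (j:ℕ)).descFactorial (i:ℕ) : ℂ) * Herm (mAux p ℓ N n (j:ℕ) - (i:ℕ)) x y)

private lemma wr_eq_DAux (p : ℕ → ℕ) (ℓ N n : ℕ) (x y : ℂ) :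
    Wr (ℓ+1) (fun j => if (j:ℕ) < ℓ then (fun s => Herm (kIdx p ℓ (ℓ-1-(j:ℕ))) s y)
        else (fun s => Herm (n + ℓ - N) s y)) x = DAux p ℓ N n x y := by
  unfold Wr DAux
  congr 1
  ext i j
  have hg : (if (j:ℕ) < ℓ then (fun s => Herm (kIdx p ℓ (ℓ-1-(j:ℕ))) s y)
      else (fun s => Herm (n + ℓ - N) s y)) = fun s : ℂ => Herm (mAux p ℓ N n (j:ℕ)) s y := by
    unfold mAux; split_ifs <;> rfl
  simp only [Matrix.of_apply]
  rw [hg, iteratedDeriv_herm]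

private lemma DAux_hom (p : ℕ → ℕ) (ℓ N n : ℕ)
    (hsumm : ∑ j : Fin (ℓ+1), mAux p ℓ N n (j:ℕ) = n + ∑ j : Fin (ℓ+1), ((j:ℕ)))
    (x y : ℂ) : ∀ t : ℂ, DAux p ℓ N n (t*x) (t^2*y) = t^n * DAux p ℓ N n x y := by
  have hcont1 : Continuous fun t : ℂ => DAux p ℓ N n (t*x) (t^2*y) := by
    unfold DAux
    apply Continuous.matrix_det
    apply continuous_matrix
    intro i j
    exact (continuous_const.mul (continuous_herm _ x y))
  have hcont2 : Continuous fun t : ℂ => t^n * DAux p ℓ N n x y := by fun_prop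
  have heq : Set.EqOn (fun t : ℂ => DAux p ℓ N n (t*x) (t^2*y))
      (fun t : ℂ => t^n * DAux p ℓ N n x y) {(0:ℂ)}ᶜ := by
    intro t ht
    have ht0 : t ≠ 0 := ht
    simp only
    unfold DAux
    set Bm : Matrix (Fin (ℓ+1)) (Fin (ℓ+1)) ℂ := Matrix.of fun i j : Fin (ℓ+1) =>
      ((mAux p ℓ N n (j:ℕ)).descFactorial (i:ℕ) : ℂ) * Herm (mAux p ℓ N n (j:ℕ) - (i:ℕ)) x y
      with hBm
    have hentry : (Matrix.of fun i j : Fin (ℓ+1) =>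
        ((mAux p ℓ N n (j:ℕ)).descFactorial (i:ℕ) : ℂ) *
          Herm (mAux p ℓ N n (j:ℕ) - (i:ℕ)) (t*x) (t^2*y))
        = Matrix.of fun i j : Fin (ℓ+1) => t ^ (mAux p ℓ N n (j:ℕ)) *
            ((t⁻¹) ^ (i:ℕ) * Bm i j) := by
      ext i j
      simp only [Matrix.of_apply, hBm]
      rw [herm_hom]
      rcases le_or_gt (i:ℕ) (mAux p ℓ N n (j:ℕ)) with h | h
      · rw [pow_sub₀ t ht0 h, inv_pow]
        ring
      · rw [Nat.descFactorial_eq_zero_iff_lt.mpr h]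
        simp
    rw [hentry]
    calc Matrix.det (Matrix.of fun i j : Fin (ℓ+1) =>
            t ^ (mAux p ℓ N n (j:ℕ)) * ((t⁻¹) ^ (i:ℕ) * Bm i j))
        = (∏ j : Fin (ℓ+1), t ^ (mAux p ℓ N n (j:ℕ))) *
            Matrix.det (Matrix.of fun i j : Fin (ℓ+1) => (t⁻¹) ^ (i:ℕ) * Bm i j) :=
          Matrix.det_mul_row _ _
      _ = (∏ j : Fin (ℓ+1), t ^ (mAux p ℓ N n (j:ℕ))) *
            ((∏ i : Fin (ℓ+1), (t⁻¹) ^ (i:ℕ)) * Matrix.det Bm) := by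
          rw [Matrix.det_mul_column]
      _ = t ^ (∑ j : Fin (ℓ+1), mAux p ℓ N n (j:ℕ)) *
            ((t⁻¹) ^ (∑ i : Fin (ℓ+1), (i:ℕ)) * Matrix.det Bm) := by
          rw [Finset.prod_pow_eq_pow_sum, Finset.prod_pow_eq_pow_sum]
      _ = t ^ n * Matrix.det Bm := by
          rw [hsumm, pow_add, inv_pow, mul_assoc]
          congr 1
          rw [← mul_assoc, mul_inv_cancel₀ (pow_ne_zero _ ht0), one_mul]
  have hfg := Continuous.ext_on (dense_compl_singleton (0:ℂ)) hcont1 hcont2 heq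
  intro t
  exact congrFun hfg t

private lemma sum_mAux (p : ℕ → ℕ) (ℓ N : ℕ)
    (hsum : ∑ i ∈ Finset.range (N + 1), p i = N)
    (hlen : ∀ i, p i ≠ 0 ↔ i < ℓ)
    (n : ℕ) (hnI : ((n : ℤ) - (N : ℤ)) ∉ Maya p) :
    ∑ j : Fin (ℓ+1), mAux p ℓ N n (j:ℕ) = n + ∑ j : Fin (ℓ+1), ((j:ℕ)) := by
  have hp1 : ∀ i, i < ℓ → 1 ≤ p i := fun i hi => Nat.one_le_iff_ne_zero.mpr ((hlen i).mpr hi)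
  have hlN : ℓ ≤ N + 1 := by
    by_contra h
    push_neg at h
    have h1 : ∀ i ∈ Finset.range (N+1), 1 ≤ p i := fun i hi =>
      hp1 i (by have := Finset.mem_range.mp hi; omega)
    have h2 := Finset.card_nsmul_le_sum (Finset.range (N+1)) p 1 h1
    rw [hsum] at h2
    simp [Finset.card_range] at h2
  have hsumℓ : ∑ i ∈ Finset.range ℓ, p i = N := by
    rw [← hsum]
    apply Finset.sum_subset (Finset.range_subset_range.mpr hlN)
    intro i _ hi
    have hiℓ : ¬ i < ℓ := by simpa using hi
    by_contra h0
    exact hiℓ ((hlen i).mp h0)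
  have hNnℓ : N ≤ n + ℓ := by
    by_contra h
    push_neg at h
    refine hnI ⟨N - n - 1, ?_⟩
    have hz : p (N - n - 1) = 0 := by
      by_contra h0
      have := (hlen _).mp h0
      omega
    rw [hz]
    push_cast
    omega
  have hsumk : ∑ i ∈ Finset.range ℓ, kIdx p ℓ i = N + ∑ i ∈ Finset.range ℓ, i := by
    have h1 : ∀ i ∈ Finset.range ℓ, kIdx p ℓ i = p i + (ℓ - 1 - i) := by
      intro i hi
      have hi' := Finset.mem_range.mp hi
      have := hp1 i hi'
      unfold kIdx
      omega
    rw [Finset.sum_congr rfl h1, Finset.sum_add_distrib, hsumℓ]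
    congr 1
    exact Finset.sum_range_reflect (fun i => i) ℓ
  rw [Fin.sum_univ_eq_sum_range (fun j => mAux p ℓ N n j) (ℓ+1),
    Fin.sum_univ_eq_sum_range (fun j => j) (ℓ+1),
    Finset.sum_range_succ, Finset.sum_range_succ (fun j => j)]
  have h2 : ∑ j ∈ Finset.range ℓ, mAux p ℓ N n j = ∑ j ∈ Finset.range ℓ, kIdx p ℓ (ℓ-1-j) := by
    apply Finset.sum_congr rfl
    intro j hj
    unfold mAux
    rw [if_pos (Finset.mem_range.mp hj)]
  have h3 : mAux p ℓ N n ℓ = n + ℓ - N := by unfold mAux; simp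
  rw [h2, h3, Finset.sum_range_reflect (fun i => kIdx p ℓ i) ℓ, hsumk]
  omega

/-- For every partition of `N`, every `n ∈ I^λ` and all `t, x, y ∈ ℂ`:
`H_n^{(λ)}(tx, t²y) = tⁿ H_n^{(λ)}(x,y)`, i.e. `H_n^{(λ)}` is homogeneous of weighted
degree `n` with `deg x = 1`, `deg y = 2`. -/
theorem XHP_weighted_homogeneous
    (p : ℕ → ℕ) (ℓ N : ℕ)
    (hanti : Antitone p)
    (hsum : ∑ i ∈ Finset.range (N + 1), p i = N)
    (hlen : ∀ i, p i ≠ 0 ↔ i < ℓ)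
    (n : ℕ) (hnI : ((n : ℤ) - (N : ℤ)) ∉ Maya p) :
    ∀ t x y : ℂ, XHP p ℓ N n (t * x) (t ^ 2 * y) = t ^ n * XHP p ℓ N n x y := by
  intro t x y
  have hsumm := sum_mAux p ℓ N hsum hlen n hnI
  unfold XHP
  rw [wr_eq_DAux, wr_eq_DAux, DAux_hom p ℓ N n hsumm x y t, mul_div_assoc]
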